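/- For each integer m ≥ 0, set c_m = x_3 (x_1 x_3)^m x_2 (x_3 x_1)^m x_3 ∈ W_3 and A_m = ⟨x_1, c_m⟩. Then each A_m is a free factor of W_3 isomorphic to the infinite dihedral group W_2, and for m ≠ m′ the subgroups A_m and A_{m′} are not conjugate in W_3. In particular, W_3 has infinitely many distinct conjugacy classes of free W_2-factors. -/

import Mathlib

/-- Relations of the free Coxeter group: each generator squares to the identity. -/
def coxeterRels (n : ℕ) : Set (FreeGroup (Fin n)) := Set.range fun i => (FreeGroup.of i) ^ 2

/-- The free Coxeter group of rank `n`, i.e. the free product of `n` copies of `ℤ/2ℤ`. -/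
abbrev W (n : ℕ) : Type := PresentedGroup (coxeterRels n)

/-- The standard order-2 generators `x_1, …, x_n` of `W n` (here indexed by `Fin n`). -/
def x (n : ℕ) (i : Fin n) : W n := PresentedGroup.of i

/-- The subgroup of inner automorphisms of a group. -/
def Inn (G : Type*) [Group G] : Subgroup (MulAut G) := (MulAut.conj : G →* MulAut G).range

instance Inn.normal (G : Type*) [Group G] : (Inn G).Normal := by
  constructor
  rintro - ⟨g, rfl⟩ φ
  refine ⟨φ g, ?_⟩
  ext y
  simp [MulAut.conj]

/-- The outer automorphism group `Aut(G)/Inn(G)`. -/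
abbrev Out (G : Type*) [Group G] : Type _ := MulAut G ⧸ Inn G
/-- A family of subgroups is a free product decomposition of `G` if the canonical
homomorphism from their abstract free product to `G` is an isomorphism. -/
def IsFreeProductOf {G : Type*} [Group G] {ι : Type*} (H : ι → Subgroup G) : Prop :=
  Function.Bijective (Monoid.CoprodI.lift fun i => (H i).subtype)

/-- A subgroup is a free factor if it admits a free complement. -/
def IsFreeFactor {G : Type*} [Group G] (A : Subgroup G) : Prop :=
  ∃ B : Subgroup G, IsFreeProductOf (fun b : Bool => bif b then A else B)

/-- The conjugacy class of a subgroup. -/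
def conjClass {G : Type*} [Group G] (A : Subgroup G) : Set (Subgroup G) :=
  {B | ∃ g : G, B = Subgroup.map (MulAut.conj g).toMonoidHom A}

/-- A partial `W₂`-basis of `W n`: a nonempty finite set of conjugacy classes of subgroups
isomorphic to `W 2` admitting representatives `A_1, …, A_k` such that
`W n = A_1 * ⋯ * A_k * B` for some subgroup `B`. -/
def IsPartialW2Basis (n : ℕ) (S : Set (Set (Subgroup (W n)))) : Prop :=
  ∃ (k : ℕ) (A : Fin k → Subgroup (W n)) (B : Subgroup (W n)),
    0 < k ∧
    (∀ i, Nonempty (↥(A i) ≃* W 2)) ∧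
    IsFreeProductOf (fun o : Option (Fin k) => o.elim B A) ∧
    Function.Injective (fun i => conjClass (A i)) ∧
    S = Set.range fun i => conjClass (A i)

/-- A subgroup of `W n` is `X*`-paired if it is generated by conjugates of `x_{2i-1}` and
`x_{2i}` for some `i ≤ ⌊n/2⌋` (with `0`-based indexing: `x_{2i}` and `x_{2i+1}`). -/
def IsXPaired (n : ℕ) (A : Subgroup (W n)) : Prop :=
  ∃ (i : ℕ) (hi : 2 * i + 1 < n) (g h : W n),
    A = Subgroup.closure
      {g * x n ⟨2 * i, by omega⟩ * g⁻¹, h * x n ⟨2 * i + 1, hi⟩ * h⁻¹}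

/-- The poset `BP_n` of partial `W₂`-bases of `W n`, ordered by inclusion. -/
def BP (n : ℕ) : Type := {S : Set (Set (Subgroup (W n))) // IsPartialW2Basis n S}

instance (n : ℕ) : PartialOrder (BP n) :=
  inferInstanceAs (PartialOrder {S : Set (Set (Subgroup (W n))) // IsPartialW2Basis n S})

/-- The poset `BP_n^*` of partial `W₂`-bases all of whose elements are conjugacy classes
of `X*`-paired free `W₂`-factors, ordered by inclusion. -/
def BPstar (n : ℕ) : Type :=
  {S : Set (Set (Subgroup (W n))) //
    IsPartialW2Basis n S ∧ ∀ C ∈ S, ∃ A : Subgroup (W n), IsXPaired n A ∧ C = conjClass A}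

instance (n : ℕ) : PartialOrder (BPstar n) :=
  inferInstanceAs (PartialOrder {S : Set (Set (Subgroup (W n))) //
    IsPartialW2Basis n S ∧ ∀ C ∈ S, ∃ A : Subgroup (W n), IsXPaired n A ∧ C = conjClass A})

open CategoryTheory in
/-- The geometric realization of the order complex (nerve) of a poset. -/
noncomputable def orderComplex (Q : Type) [Preorder Q] : TopCat :=
  SSet.toTop.obj (nerve Q)

/-- The element `c_m = x₃ (x₁x₃)^m x₂ (x₃x₁)^m x₃` of `W 3`. -/
def cElt (m : ℕ) : W 3 :=
  x 3 2 * (x 3 0 * x 3 2) ^ m * x 3 1 * (x 3 2 * x 3 0) ^ m * x 3 2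

/-- The subgroup `A_m = ⟨x₁, c_m⟩` of `W 3`. -/
def Asub (m : ℕ) : Subgroup (W 3) := Subgroup.closure {x 3 0, cElt m}



section Aux

section Helpers

lemma x_mul_self (n : ℕ) (i : Fin n) : x n i * x n i = 1 := by
  have h1 : ((FreeGroup.of i) ^ 2 : FreeGroup (Fin n)) ∈ Subgroup.normalClosure (coxeterRels n) :=
    Subgroup.subset_normalClosure ⟨i, rfl⟩
  have h : PresentedGroup.mk (coxeterRels n) ((FreeGroup.of i) ^ 2) = 1 :=
    (QuotientGroup.eq_one_iff _).mpr h1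
  simpa [x, PresentedGroup.of, sq, map_mul] using h

lemma x_inv (n : ℕ) (i : Fin n) : (x n i)⁻¹ = x n i :=
  inv_eq_of_mul_eq_one_right (x_mul_self n i)

variable {G : Type*} [Group G]

lemma invol_cancel {b : G} (hb : b * b = 1) (z : G) : b * (b * z) = z := by
  rw [← mul_assoc, hb, one_mul]

lemma inv_aux {c d : G} (hc : c * c = 1) (hd : d * d = 1) (m : ℕ) :
    (c * (d * c) ^ m)⁻¹ = (c * d) ^ m * c := by
  have hic : c⁻¹ = c := inv_eq_of_mul_eq_one_right hc
  have hid : d⁻¹ = d := inv_eq_of_mul_eq_one_right hd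
  have h1 : ((c * d) ^ m : G) = ((d * c) ^ m)⁻¹ := by
    rw [← inv_pow, mul_inv_rev, hic, hid]
  rw [h1, mul_inv_rev, hic]

/-- dihedral classification -/
lemma dihedral_mem {a b : G} (ha : a * a = 1) (hb : b * b = 1) {w : G}
    (hw : w ∈ Subgroup.closure {a, b}) :
    (∃ k : ℤ, w = (a * b) ^ k) ∨ (∃ k : ℤ, w = (a * b) ^ k * a) := by
  have hia : a⁻¹ = a := inv_eq_of_mul_eq_one_right ha
  have hib : b⁻¹ = b := inv_eq_of_mul_eq_one_right hb
  have hconj : ∀ k : ℤ, a * (a * b) ^ k = (a * b) ^ (-k) * a := by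
    intro k
    have h1 : a * (a * b) * a⁻¹ = (a * b)⁻¹ := by
      simp [mul_inv_rev, hia, hib, ← mul_assoc, ha]
    have h2 : a * (a * b) ^ k * a⁻¹ = (a * b) ^ (-k) := by
      rw [← conj_zpow, h1, inv_zpow, zpow_neg]
    calc a * (a * b) ^ k = a * (a * b) ^ k * a⁻¹ * a := by simp
    _ = (a * b) ^ (-k) * a := by rw [h2]
  induction hw using Subgroup.closure_induction with
  | mem w hw =>
      rcases hw with rfl | rfl
      · exact Or.inr ⟨0, by simp⟩
      · refine Or.inr ⟨-1, ?_⟩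
        rw [zpow_neg_one, mul_inv_rev, hia, hib, mul_assoc, ha, mul_one]
  | one => exact Or.inl ⟨0, by simp⟩
  | mul u v hu hv ihu ihv =>
      rcases ihu with ⟨j, rfl⟩ | ⟨j, rfl⟩ <;> rcases ihv with ⟨k, rfl⟩ | ⟨k, rfl⟩
      · exact Or.inl ⟨j + k, by rw [zpow_add]⟩
      · exact Or.inr ⟨j + k, by rw [zpow_add, mul_assoc]⟩
      · refine Or.inr ⟨j - k, ?_⟩
        rw [mul_assoc, hconj k, ← mul_assoc, ← zpow_add, sub_eq_add_neg]
      · refine Or.inl ⟨j - k, ?_⟩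
        rw [mul_assoc, ← mul_assoc a, hconj k, mul_assoc, ha, mul_one,
          ← zpow_add, sub_eq_add_neg]
  | inv u hu ihu =>
      rcases ihu with ⟨k, rfl⟩ | ⟨k, rfl⟩
      · exact Or.inl ⟨-k, by rw [zpow_neg]⟩
      · refine Or.inr ⟨k, ?_⟩
        rw [mul_inv_rev, hia, ← zpow_neg, hconj, neg_neg]

end Helpers

section MkHom

variable {G : Type*} [Group G]

/-- build a hom out of `W n` from involutions -/
def mkHom {n : ℕ} (f : Fin n → G) (h : ∀ i, f i * f i = 1) : W n →* G :=
  PresentedGroup.toGroup (f := f) (by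
    rintro r ⟨i, rfl⟩
    rw [map_pow, FreeGroup.lift_apply_of, sq]
    exact h i)

@[simp] lemma mkHom_x {n : ℕ} (f : Fin n → G) (h : ∀ i, f i * f i = 1) (i : Fin n) :
    mkHom f h (x n i) = f i :=
  PresentedGroup.toGroup.of _

lemma hom_ext {n : ℕ} {φ ψ : W n →* G} (h : ∀ i, φ (x n i) = ψ (x n i)) : φ = ψ :=
  PresentedGroup.ext h

end MkHom

section CElt

/-- the conjugating element -/
def gElt (m : ℕ) : W 3 := x 3 2 * (x 3 0 * x 3 2) ^ m

lemma gElt_inv (m : ℕ) : (gElt m)⁻¹ = (x 3 2 * x 3 0) ^ m * x 3 2 :=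
  inv_aux (x_mul_self 3 2) (x_mul_self 3 0) m

lemma cElt_eq (m : ℕ) : cElt m = gElt m * x 3 1 * (gElt m)⁻¹ := by
  rw [gElt_inv]; simp [cElt, gElt, mul_assoc]

lemma cElt_mul_self (m : ℕ) : cElt m * cElt m = 1 := by
  rw [cElt_eq]
  simp [mul_assoc, invol_cancel (x_mul_self 3 1)]

lemma x1_eq (m : ℕ) : (gElt m)⁻¹ * cElt m * gElt m = x 3 1 := by
  rw [cElt_eq]; simp [mul_assoc]

lemma x0_mem_Asub (m : ℕ) : x 3 0 ∈ Asub m :=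
  Subgroup.subset_closure (by simp)

lemma cElt_mem_Asub (m : ℕ) : cElt m ∈ Asub m :=
  Subgroup.subset_closure (by simp)

end CElt

section Iso

/-- range of a map on `Fin 2` -/
lemma range_fin_two {α : Type*} (f : Fin 2 → α) : Set.range f = {f 0, f 1} := by
  ext a
  constructor
  · rintro ⟨i, rfl⟩; fin_cases i <;> simp
  · rintro (rfl | rfl)
    exacts [⟨0, rfl⟩, ⟨1, rfl⟩]

lemma pow_self_mul_self {G : Type*} [Group G] {a : G} (ha : a * a = 1) (m : ℕ) :
    a ^ m * a ^ m = 1 := by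
  rw [← pow_add, ← two_mul, pow_mul, sq, ha, one_pow]

/-- the inclusion of `W 2` into `W 3` with image `Asub m` -/
noncomputable def iota (m : ℕ) : W 2 →* W 3 :=
  mkHom ![x 3 0, cElt m] (by
    intro i
    fin_cases i
    · exact x_mul_self 3 0
    · exact cElt_mul_self m)

/-- the retraction `W 3 → W 2` -/
noncomputable def retr (m : ℕ) : W 3 →* W 2 :=
  mkHom ![x 2 0, (x 2 0) ^ m * x 2 1 * (x 2 0) ^ m, 1] (by
    intro i
    have h0 := pow_self_mul_self (x_mul_self 2 0) m
    fin_cases i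
    · exact x_mul_self 2 0
    · show (x 2 0) ^ m * x 2 1 * (x 2 0) ^ m * ((x 2 0) ^ m * x 2 1 * (x 2 0) ^ m) = 1
      calc (x 2 0) ^ m * x 2 1 * (x 2 0) ^ m * ((x 2 0) ^ m * x 2 1 * (x 2 0) ^ m)
          = (x 2 0) ^ m * (x 2 1 * ((x 2 0) ^ m * ((x 2 0) ^ m * (x 2 1 * (x 2 0) ^ m)))) := by
            simp [mul_assoc]
        _ = 1 := by
            rw [invol_cancel h0, invol_cancel (x_mul_self 2 1), h0]
    · exact one_mul 1)

lemma retr_iota (m : ℕ) : (retr m).comp (iota m) = MonoidHom.id (W 2) := by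
  apply hom_ext
  intro i
  have h0 := pow_self_mul_self (x_mul_self 2 0) m
  fin_cases i
  · simp [iota, retr]
  · show retr m (iota m (x 2 1)) = x 2 1
    rw [show iota m (x 2 1) = cElt m by simp [iota]]
    simp only [cElt, map_mul, map_pow, retr, mkHom_x]
    simp only [Matrix.cons_val_zero, Matrix.cons_val_one, Matrix.head_cons,
      Matrix.cons_val_two, Matrix.tail_cons]
    calc (1 : W 2) * (x 2 0 * 1) ^ m * ((x 2 0) ^ m * x 2 1 * (x 2 0) ^ m) * (1 * x 2 0) ^ m * 1
        = (x 2 0) ^ m * ((x 2 0) ^ m * (x 2 1 * ((x 2 0) ^ m * (x 2 0) ^ m))) := by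
          simp [mul_assoc]
      _ = x 2 1 := by rw [h0, mul_one, invol_cancel h0]

lemma iota_injective (m : ℕ) : Function.Injective (iota m) := by
  have h := retr_iota m
  intro u v huv
  have h1 : retr m (iota m u) = retr m (iota m v) := by rw [huv]
  simpa using (DFunLike.congr_fun h u).symm.trans (h1.trans (DFunLike.congr_fun h v))

lemma iota_range (m : ℕ) : (iota m).range = Asub m := by
  rw [MonoidHom.range_eq_map, ← PresentedGroup.closure_range_of (coxeterRels 2),
    MonoidHom.map_closure (iota m)]
  congr 1
  rw [show (Set.range (PresentedGroup.of : Fin 2 → W 2)) = Set.range (x 2) from rfl,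
    range_fin_two]
  simp only [Set.image_insert_eq, Set.image_singleton]
  rw [show iota m (x 2 0) = x 3 0 by simp [iota], show iota m (x 2 1) = cElt m by simp [iota]]

lemma Asub_iso (m : ℕ) : Nonempty (↥(Asub m) ≃* W 2) :=
  ⟨((MulEquiv.subgroupCongr (iota_range m)).symm.trans
      (MonoidHom.ofInjective (iota_injective m)).symm)⟩

end Iso

section FreeFactor

/-- the complement -/
def Bsub : Subgroup (W 3) := Subgroup.closure {x 3 2}

lemma x2_mem_Bsub : x 3 2 ∈ Bsub := Subgroup.subset_closure rfl

/-- the free product decomposition family -/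
abbrev Fam (m : ℕ) : Bool → Subgroup (W 3) := fun b => bif b then Asub m else Bsub

open Monoid in
theorem Asub_freeProduct (m : ℕ) : IsFreeProductOf (Fam m) := by
  set T := CoprodI (fun b : Bool => ↥(Fam m b)) with hT
  set L : T →* W 3 := CoprodI.lift (fun b => (Fam m b).subtype) with hL
  -- the generators inside the coproduct
  set a1 : T := CoprodI.of (i := true) (⟨x 3 0, x0_mem_Asub m⟩ : ↥(Asub m)) with ha1
  set a2 : T := CoprodI.of (i := true) (⟨cElt m, cElt_mem_Asub m⟩ : ↥(Asub m)) with ha2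
  set b3 : T := CoprodI.of (i := false) (⟨x 3 2, x2_mem_Bsub⟩ : ↥Bsub) with hb3
  have ha1sq : a1 * a1 = 1 := by
    rw [ha1, ← map_mul, ← map_one (CoprodI.of (i := true) (M := fun b => ↥(Fam m b)))]
    congr 1
    ext
    exact x_mul_self 3 0
  have ha2sq : a2 * a2 = 1 := by
    rw [ha2, ← map_mul, ← map_one (CoprodI.of (i := true) (M := fun b => ↥(Fam m b)))]
    congr 1
    ext
    exact cElt_mul_self m
  have hb3sq : b3 * b3 = 1 := by
    rw [hb3, ← map_mul, ← map_one (CoprodI.of (i := false) (M := fun b => ↥(Fam m b)))]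
    congr 1
    ext
    exact x_mul_self 3 2
  set Gc : T := b3 * (a1 * b3) ^ m with hGc
  have hGcinv : Gc⁻¹ = (b3 * a1) ^ m * b3 := inv_aux hb3sq ha1sq m
  have hmid : (Gc⁻¹ * a2 * Gc) * (Gc⁻¹ * a2 * Gc) = 1 := by
    simp [mul_assoc, invol_cancel ha2sq]
  set ψ : W 3 →* T := mkHom ![a1, Gc⁻¹ * a2 * Gc, b3] (by
    intro i
    fin_cases i
    · exact ha1sq
    · exact hmid
    · exact hb3sq) with hψ
  have hψ0 : ψ (x 3 0) = a1 := by simp [hψ]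
  have hψ1 : ψ (x 3 1) = Gc⁻¹ * a2 * Gc := by simp [hψ]
  have hψ2 : ψ (x 3 2) = b3 := by simp [hψ]
  have hψc : ψ (cElt m) = a2 := by
    have : ψ (cElt m) = b3 * (a1 * b3) ^ m * (Gc⁻¹ * a2 * Gc) * ((b3 * a1) ^ m * b3) := by
      simp only [cElt, map_mul, map_pow, hψ0, hψ1, hψ2, mul_assoc]
    rw [this, ← hGcinv, ← hGc]
    simp [mul_assoc, invol_cancel]
    have e : ∀ g a : CoprodI (fun b : Bool => ↥(Fam m b)), g * (g⁻¹ * (a * (g * g⁻¹))) = a := fun g a => by group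
    exact e Gc a2
  -- ψ is a left inverse of L
  have keyA : ∀ w (hw : w ∈ Asub m),
      ψ w = (CoprodI.of (M := fun b => ↥(Fam m b)) (i := true) ⟨w, hw⟩) := by
    intro w hw
    induction hw using Subgroup.closure_induction with
    | mem w hwmem =>
        rcases hwmem with rfl | rfl
        · exact hψ0
        · exact hψc
    | one => exact (map_one ψ).trans (map_one _).symm
    | mul u v hu hv ihu ihv => rw [map_mul, ihu, ihv, ← map_mul]; rfl
    | inv u hu ihu => rw [map_inv, ihu, ← map_inv]; rfl
  have keyB : ∀ w (hw : w ∈ Bsub),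
      ψ w = (CoprodI.of (M := fun b => ↥(Fam m b)) (i := false) ⟨w, hw⟩) := by
    intro w hw
    induction hw using Subgroup.closure_induction with
    | mem w hwmem => rcases hwmem with rfl; exact hψ2
    | one => exact (map_one ψ).trans (map_one _).symm
    | mul u v hu hv ihu ihv => rw [map_mul, ihu, ihv, ← map_mul]; rfl
    | inv u hu ihu => rw [map_inv, ihu, ← map_inv]; rfl
  have hcomp : ψ.comp L = MonoidHom.id T := by
    apply CoprodI.ext_hom
    intro b
    ext u
    simp only [MonoidHom.comp_apply, MonoidHom.id_apply, hL, CoprodI.lift_of]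
    cases b with
    | true => exact keyA u.1 u.2
    | false => exact keyB u.1 u.2
  constructor
  · intro u v huv
    have hu := DFunLike.congr_fun hcomp u
    have hv := DFunLike.congr_fun hcomp v
    simp only [MonoidHom.comp_apply, MonoidHom.id_apply] at hu hv
    exact hu.symm.trans ((congrArg ψ huv).trans hv)
  · intro w
    have h0 : x 3 0 ∈ L.range := ⟨a1, by rw [ha1, hL, CoprodI.lift_of]; rfl⟩
    have hc : cElt m ∈ L.range := ⟨a2, by rw [ha2, hL, CoprodI.lift_of]; rfl⟩
    have h2 : x 3 2 ∈ L.range := ⟨b3, by rw [hb3, hL, CoprodI.lift_of]; rfl⟩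
    have hg : gElt m ∈ L.range := mul_mem h2 (pow_mem (mul_mem h0 h2) m)
    have h1 : x 3 1 ∈ L.range := by
      rw [← x1_eq m]
      exact mul_mem (mul_mem (inv_mem hg) hc) hg
    refine PresentedGroup.generated_by _ L.range (fun j => ?_) w
    fin_cases j
    exacts [h0, h1, h2]

theorem Asub_isFreeFactor (m : ℕ) : IsFreeFactor (Asub m) :=
  ⟨Bsub, Asub_freeProduct m⟩

end FreeFactor

noncomputable section Rep

abbrev GL2 : Type := (Matrix (Fin 2) (Fin 2) ℝ)ˣ

def M1 : Matrix (Fin 2) (Fin 2) ℝ := !![1, 0; 0, -1]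
def M2 : Matrix (Fin 2) (Fin 2) ℝ := !![-1, 0; 2, 1]
def M3 : Matrix (Fin 2) (Fin 2) ℝ := !![1, 2; 0, -1]

lemma M1_sq : M1 * M1 = 1 := by
  norm_num [M1, Matrix.mul_fin_two]
  exact Matrix.one_fin_two.symm

lemma M2_sq : M2 * M2 = 1 := by
  norm_num [M2, Matrix.mul_fin_two]
  exact Matrix.one_fin_two.symm

lemma M3_sq : M3 * M3 = 1 := by
  norm_num [M3, Matrix.mul_fin_two]
  exact Matrix.one_fin_two.symm

def u1 : GL2 := ⟨M1, M1, M1_sq, M1_sq⟩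
def u2 : GL2 := ⟨M2, M2, M2_sq, M2_sq⟩
def u3 : GL2 := ⟨M3, M3, M3_sq, M3_sq⟩

/-- the 2-dimensional representation of `W 3` -/
def rho : W 3 →* GL2 :=
  mkHom ![u1, u2, u3] (by
    intro i
    fin_cases i
    · exact Units.ext M1_sq
    · exact Units.ext M2_sq
    · exact Units.ext M3_sq)

@[simp] lemma rho_x0 : rho (x 3 0) = u1 := by simp [rho]
@[simp] lemma rho_x1 : rho (x 3 1) = u2 := by simp [rho]
@[simp] lemma rho_x2 : rho (x 3 2) = u3 := by simp [rho]

/-- the determinant character -/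
def Dhom : W 3 →* ℝ :=
  Matrix.detMonoidHom.comp ((Units.coeHom _).comp rho)

lemma Dhom_apply (w : W 3) : Dhom w = ((rho w : GL2) : Matrix (Fin 2) (Fin 2) ℝ).det := rfl

@[simp] lemma Dhom_x0 : Dhom (x 3 0) = -1 := by
  rw [Dhom_apply, rho_x0]; show M1.det = -1; norm_num [M1, Matrix.det_fin_two_of]

@[simp] lemma Dhom_x1 : Dhom (x 3 1) = -1 := by
  rw [Dhom_apply, rho_x1]; show M2.det = -1; norm_num [M2, Matrix.det_fin_two_of]

@[simp] lemma Dhom_x2 : Dhom (x 3 2) = -1 := by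
  rw [Dhom_apply, rho_x2]; show M3.det = -1; norm_num [M3, Matrix.det_fin_two_of]

/-- the hyperbolic element -/
def pElt (m : ℕ) : W 3 := x 3 0 * cElt m

lemma pElt_mem (m : ℕ) : pElt m ∈ Asub m := mul_mem (x0_mem_Asub m) (cElt_mem_Asub m)

lemma Dhom_cElt (m : ℕ) : Dhom (cElt m) = -1 := by
  simp only [cElt, map_mul, map_pow, Dhom_x0, Dhom_x1, Dhom_x2]
  norm_num

lemma Dhom_pElt (m : ℕ) : Dhom (pElt m) = 1 := by
  simp [pElt, map_mul, Dhom_cElt]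

lemma pElt_pow_inv (m n : ℕ) : ((pElt m) ^ n)⁻¹ = x 3 0 * (pElt m) ^ n * (x 3 0)⁻¹ := by
  have hci : (cElt m)⁻¹ = cElt m := inv_eq_of_mul_eq_one_right (cElt_mul_self m)
  have h : x 3 0 * pElt m * (x 3 0)⁻¹ = (pElt m)⁻¹ := by
    rw [pElt, mul_inv_rev, hci, x_inv]
    rw [← mul_assoc, x_mul_self, one_mul]
  rw [← conj_pow, h, inv_pow]

lemma Dhom_pElt_zpow (m : ℕ) (k : ℤ) : Dhom ((pElt m) ^ k) = 1 := by
  rcases k with n | n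
  · rw [Int.ofNat_eq_coe, zpow_natCast, map_pow, Dhom_pElt, one_pow]
  · rw [zpow_negSucc, pElt_pow_inv, x_inv, map_mul, map_mul, map_pow, Dhom_pElt, one_pow,
      Dhom_x0]
    norm_num

-- explicit matrix computations
lemma u13_pow_val (n : ℕ) : (((u1 * u3) ^ n : GL2) : Matrix (Fin 2) (Fin 2) ℝ)
    = !![1, 2 * (n : ℝ); 0, 1] := by
  induction n with
  | zero => ext i j; fin_cases i <;> fin_cases j <;> simp
  | succ n ih =>
      rw [pow_succ, Units.val_mul, ih, Units.val_mul]
      ext i j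
      fin_cases i <;> fin_cases j <;>
        simp [u1, u3, M1, M3, Matrix.mul_apply, Fin.sum_univ_two] <;> push_cast <;> ring

lemma u31_pow_val (n : ℕ) : (((u3 * u1) ^ n : GL2) : Matrix (Fin 2) (Fin 2) ℝ)
    = !![1, -(2 * (n : ℝ)); 0, 1] := by
  induction n with
  | zero => ext i j; fin_cases i <;> fin_cases j <;> simp
  | succ n ih =>
      rw [pow_succ, Units.val_mul, ih, Units.val_mul]
      ext i j
      fin_cases i <;> fin_cases j <;>
        simp [u1, u3, M1, M3, Matrix.mul_apply, Fin.sum_univ_two] <;> push_cast <;> ring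

lemma rho_pElt_val (m : ℕ) : ((rho (pElt m) : GL2) : Matrix (Fin 2) (Fin 2) ℝ)
    = !![4 * (m : ℝ) + 3, 8 * (m : ℝ) ^ 2 + 12 * (m : ℝ) + 4; 2, 4 * (m : ℝ) + 3] := by
  have h : rho (pElt m) = (u1 * u3) * (u1 * u3) ^ m * u2 * (u3 * u1) ^ m * u3 := by
    rw [pElt, cElt]
    simp only [map_mul, map_pow, rho_x0, rho_x1, rho_x2]
    group
  rw [h]
  simp only [Units.val_mul, u13_pow_val, u31_pow_val]
  ext i j
  fin_cases i <;> fin_cases j <;>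
    simp [u1, u2, u3, M1, M2, M3, Matrix.mul_apply, Fin.sum_univ_two] <;> push_cast <;> ring

lemma trace_rho_pElt (m : ℕ) :
    Matrix.trace ((rho (pElt m) : GL2) : Matrix (Fin 2) (Fin 2) ℝ) = 8 * m + 6 := by
  rw [rho_pElt_val, Matrix.trace_fin_two_of]
  ring

lemma det_rho_pElt (m : ℕ) :
    ((rho (pElt m) : GL2) : Matrix (Fin 2) (Fin 2) ℝ).det = 1 := by
  have := Dhom_pElt m
  rwa [Dhom_apply] at this

end Rep

section Trace

/-- Cayley–Hamilton for 2×2 matrices of determinant one -/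
lemma ch_two (N : Matrix (Fin 2) (Fin 2) ℝ) (hdet : N.det = 1) :
    N * N = (Matrix.trace N) • N - 1 := by
  rw [Matrix.det_fin_two] at hdet
  ext i j
  rw [Matrix.sub_apply, Matrix.smul_apply, Matrix.trace_fin_two]
  fin_cases i <;> fin_cases j <;>
    simp [Matrix.mul_apply, Fin.sum_univ_two, Matrix.one_apply] <;>
    first
      | linear_combination (norm := ring1) -hdet
      | ring1

lemma trace_pow_rec (N : Matrix (Fin 2) (Fin 2) ℝ) (hdet : N.det = 1) (n : ℕ) :
    Matrix.trace (N ^ (n + 2)) =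
      Matrix.trace N * Matrix.trace (N ^ (n + 1)) - Matrix.trace (N ^ n) := by
  have h : N ^ (n + 2) = N ^ n * (N * N) := by rw [pow_add, sq]
  rw [h, ch_two N hdet, mul_sub, mul_one, Matrix.mul_smul, Matrix.trace_sub, Matrix.trace_smul,
    ← pow_succ, smul_eq_mul]

lemma trace_pow_mono (N : Matrix (Fin 2) (Fin 2) ℝ) (hdet : N.det = 1)
    (htr : 6 ≤ Matrix.trace N) :
    ∀ n : ℕ, 2 ≤ Matrix.trace (N ^ n) ∧ Matrix.trace (N ^ n) ≤ Matrix.trace (N ^ (n + 1)) := by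
  intro n
  induction n with
  | zero =>
      constructor
      · rw [pow_zero, Matrix.trace_one]; norm_num
      · rw [pow_zero, pow_one, Matrix.trace_one]; norm_num; linarith
  | succ n ih =>
      obtain ⟨h2, hle⟩ := ih
      constructor
      · linarith
      · rw [trace_pow_rec N hdet n]
        nlinarith

lemma trace_pow_ge (N : Matrix (Fin 2) (Fin 2) ℝ) (hdet : N.det = 1)
    (htr : 6 ≤ Matrix.trace N) (n : ℕ) (hn : 1 ≤ n) :
    Matrix.trace N ≤ Matrix.trace (N ^ n) := by
  induction n with
  | zero => omega
  | succ n ih =>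
      rcases Nat.eq_or_lt_of_le hn with h | h
      · rw [← h, pow_one]
      · have h1 : 1 ≤ n := by omega
        exact le_trans (ih h1) (trace_pow_mono N hdet htr n).2

end Trace

noncomputable section Invariant

/-- the conjugacy-invariant trace set of a subgroup of `W 3` -/
def TrS (A : Subgroup (W 3)) : Set ℝ :=
  {r | ∃ w ∈ A, Dhom w = 1 ∧ Matrix.trace ((rho w : GL2) : Matrix (Fin 2) (Fin 2) ℝ) = r}

lemma conj_inv_aux (g w : W 3) :
    Dhom (g * w * g⁻¹) = Dhom w ∧
      Matrix.trace ((rho (g * w * g⁻¹) : GL2) : Matrix (Fin 2) (Fin 2) ℝ)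
        = Matrix.trace ((rho w : GL2) : Matrix (Fin 2) (Fin 2) ℝ) := by
  constructor
  · have h1 : Dhom g * Dhom g⁻¹ = 1 := by rw [← map_mul, mul_inv_cancel, map_one]
    rw [map_mul, map_mul, mul_comm (Dhom g) (Dhom w), mul_assoc, h1, mul_one]
  · rw [map_mul, map_mul, map_inv, Units.val_mul, Units.val_mul]
    exact Matrix.trace_units_conj (rho g) _

lemma TrS_conj (g : W 3) (A : Subgroup (W 3)) :
    TrS (Subgroup.map (MulAut.conj g).toMonoidHom A) = TrS A := by
  ext r
  constructor
  · rintro ⟨w', hw', hD, htr⟩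
    obtain ⟨w, hw, rfl⟩ := Subgroup.mem_map.mp hw'
    have h := conj_inv_aux g w
    refine ⟨w, hw, ?_, ?_⟩
    · rw [← h.1]; exact hD
    · rw [← h.2]; exact htr
  · rintro ⟨w, hw, hD, htr⟩
    have h := conj_inv_aux g w
    exact ⟨g * w * g⁻¹, Subgroup.mem_map.mpr ⟨w, hw, rfl⟩, h.1.trans hD, h.2.trans htr⟩

lemma TrS_mem (m : ℕ) : (8 * (m : ℝ) + 6) ∈ TrS (Asub m) :=
  ⟨pElt m, pElt_mem m, by rw [Dhom_apply]; exact det_rho_pElt m, trace_rho_pElt m⟩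

lemma trace_rho_pElt_zpow (m : ℕ) (k : ℤ) :
    Matrix.trace ((rho ((pElt m) ^ k) : GL2) : Matrix (Fin 2) (Fin 2) ℝ)
      = Matrix.trace ((((rho (pElt m)) ^ k.natAbs : GL2)) : Matrix (Fin 2) (Fin 2) ℝ) := by
  rcases k with n | n
  · rw [Int.ofNat_eq_coe, zpow_natCast, map_pow, Int.natAbs_natCast]
  · rw [zpow_negSucc, pElt_pow_inv, x_inv, map_mul, map_mul, map_pow]
    rw [show rho (x 3 0) * rho (pElt m) ^ (n + 1) * rho (x 3 0)
        = rho (x 3 0) * rho (pElt m) ^ (n + 1) * (rho (x 3 0))⁻¹ by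
      congr 1
      rw [← map_inv, x_inv]]
    rw [Units.val_mul, Units.val_mul]
    rw [Matrix.trace_units_conj (rho (x 3 0)) _]
    rw [Int.natAbs_negSucc]

lemma TrS_bound (m : ℕ) : ∀ r ∈ TrS (Asub m), r = 2 ∨ (8 * (m : ℝ) + 6) ≤ r := by
  rintro r ⟨w, hw, hD, rfl⟩
  have hcl : w ∈ Subgroup.closure {x 3 0, cElt m} := hw
  rcases dihedral_mem (x_mul_self 3 0) (cElt_mul_self m) hcl with ⟨k, rfl⟩ | ⟨k, rfl⟩
  · rw [show x 3 0 * cElt m = pElt m from rfl] at *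
    rw [trace_rho_pElt_zpow m k]
    rcases Nat.eq_zero_or_pos k.natAbs with h0 | h1
    · left
      rw [h0, pow_zero, Units.val_one, Matrix.trace_one]
      norm_num
    · right
      have htr6 : (6 : ℝ) ≤ Matrix.trace ((rho (pElt m) : GL2) : Matrix (Fin 2) (Fin 2) ℝ) := by
        rw [trace_rho_pElt m]
        have : (0 : ℝ) ≤ m := Nat.cast_nonneg m
        linarith
      have hge := trace_pow_ge _ (det_rho_pElt m) htr6 k.natAbs h1
      rw [trace_rho_pElt m] at hge
      have hval : (((rho (pElt m)) ^ k.natAbs : GL2) : Matrix (Fin 2) (Fin 2) ℝ)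
          = (((rho (pElt m)) : GL2) : Matrix (Fin 2) (Fin 2) ℝ) ^ k.natAbs :=
        Units.val_pow_eq_pow_val _ _
      rw [hval]
      exact hge
  · exfalso
    rw [show x 3 0 * cElt m = pElt m from rfl] at hD
    rw [map_mul, Dhom_pElt_zpow, Dhom_x0, one_mul] at hD
    norm_num at hD

end Invariant

theorem nonconj {m m' : ℕ} (h : m ≠ m') : conjClass (Asub m) ≠ conjClass (Asub m') := by
  intro hEq
  have hself : Asub m' ∈ conjClass (Asub m') := by
    refine ⟨1, ?_⟩
    rw [map_one]
    exact (Subgroup.map_id _).symm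
  rw [← hEq] at hself
  obtain ⟨g, hg⟩ := hself
  have hTr : TrS (Asub m') = TrS (Asub m) := by rw [hg, TrS_conj]
  have h1 : (8 * (m : ℝ) + 6) ∈ TrS (Asub m') := by rw [hTr]; exact TrS_mem m
  have h2 : (8 * (m' : ℝ) + 6) ∈ TrS (Asub m) := by rw [← hTr]; exact TrS_mem m'
  have hm : (0 : ℝ) ≤ m := Nat.cast_nonneg m
  have hm' : (0 : ℝ) ≤ m' := Nat.cast_nonneg m'
  have b1 := TrS_bound m' _ h1
  have b2 := TrS_bound m _ h2
  have : (m : ℝ) = m' := by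
    rcases b1 with e | le1
    · linarith
    · rcases b2 with e | le2
      · linarith
      · linarith
  exact h (Nat.cast_injective this)

end Aux

/-- Each `A_m` is a free factor of `W 3` isomorphic to the infinite dihedral group `W 2`,
distinct `A_m` are nonconjugate, and consequently `W 3` has infinitely many conjugacy
classes of free `W₂`-factors. -/
theorem infinitely_many_W2_factor_classes :
    (∀ m : ℕ, IsFreeFactor (Asub m) ∧ Nonempty (↥(Asub m) ≃* W 2)) ∧
    (∀ m m' : ℕ, m ≠ m' → conjClass (Asub m) ≠ conjClass (Asub m')) ∧
    {S : Set (Subgroup (W 3)) |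
      ∃ A : Subgroup (W 3), IsFreeFactor A ∧ Nonempty (↥A ≃* W 2) ∧ S = conjClass A}.Infinite
    := by
  refine ⟨fun m => ⟨Asub_isFreeFactor m, Asub_iso m⟩, fun m m' h => nonconj h, ?_⟩
  apply Set.infinite_of_injective_forall_mem
    (f := fun m : ℕ => conjClass (Asub m))
  · intro a b hab
    by_contra hne
    exact nonconj hne hab
  · intro m
    exact ⟨Asub m, Asub_isFreeFactor m, Asub_iso m, rfl⟩
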